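/- Let 𝕄₁ = ((G₁, M₁, I₁, R_□₁, R_◇₁), V₁) and 𝕄₂ = ((G₂, M₂, I₂, R_□₂, R_◇₂), V₂) be polarity-based models for the non-distributive modal μ-calculus, and let (S, T) be a simulation from 𝕄₁ to 𝕄₂. Then for every formula φ of the non-distributive modal μ-calculus all of whose variables are bound: (1) for all g₁ ∈ G₁, g₂ ∈ G₂, if g₁ S g₂ and 𝕄₁, g₁ ⊩ φ, then 𝕄₂, g₂ ⊩ φ; and (2) for all m₁ ∈ M₁, m₂ ∈ M₂, if m₁ T m₂ and 𝕄₂, m₂ ≻ φ, then 𝕄₁, m₁ ≻ φ. -/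

import Mathlib

/-- Formulas of the non-distributive modal μ-calculus, with atoms in `P` and
(fixed-point) variables in `Var`. -/
inductive MuForm (P Var : Type*) : Type _
  | atom : P → MuForm P Var
  | var : Var → MuForm P Var
  | bot : MuForm P Var
  | top : MuForm P Var
  | or : MuForm P Var → MuForm P Var → MuForm P Var
  | and : MuForm P Var → MuForm P Var → MuForm P Var
  | box : MuForm P Var → MuForm P Var
  | dia : MuForm P Var → MuForm P Var
  | mu : Var → MuForm P Var → MuForm P Var
  | nu : Var → MuForm P Var → MuForm P Var

variable {P Var G M : Type*}

/-- Galois-stability of `R_□^{(0)}[Y]` for arbitrary `Y ⊆ M`, from `I`-compatibility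
of `R_□` on singletons. -/
theorem stable_extentClosure_box (I : G → M → Prop) (R : G → M → Prop)
    (h : ∀ m : M,
      lowerPolar I (upperPolar I (lowerPolar R {m})) = lowerPolar R {m})
    (Y : Set M) :
    lowerPolar I (upperPolar I (lowerPolar R Y)) = lowerPolar R Y := by
  apply subset_antisymm
  · intro g hg m hm
    have h1 : lowerPolar R Y ⊆ lowerPolar R ({m} : Set M) := by
      intro g' hg' m' hm'
      rcases hm' with rfl
      exact hg' hm
    have h2 := lowerPolar_anti I (upperPolar_anti I h1)
    rw [h m] at h2
    exact h2 hg rfl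
  · exact subset_lowerPolar_upperPolar I _

/-- Galois-stability of `R_◇^{(0)}[B]` for arbitrary `B ⊆ G`, from `I`-compatibility
of `R_◇` on singletons. -/
theorem stable_extentClosure_dia (I : G → M → Prop) (R : M → G → Prop)
    (h : ∀ g : G,
      upperPolar I (lowerPolar I (lowerPolar R {g})) = lowerPolar R {g})
    (B : Set G) :
    upperPolar I (lowerPolar I (lowerPolar R B)) = lowerPolar R B := by
  apply subset_antisymm
  · intro m hm g hg
    have h1 : lowerPolar R B ⊆ lowerPolar R ({g} : Set G) := by
      intro m' hm' g' hg'
      rcases hg' with rfl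
      exact hm' hg
    have h2 := upperPolar_anti I (lowerPolar_anti I h1)
    rw [h g] at h2
    exact h2 hm rfl
  · exact subset_upperPolar_lowerPolar I _

/-- The box operation `[R_□]c = (R_□^{(0)}[⦃c⦄], (R_□^{(0)}[⦃c⦄])^↑)` on the concept
lattice of an enriched formal context. -/
def boxConcept (I : G → M → Prop) (R : G → M → Prop)
    (h : ∀ m : M,
      lowerPolar I (upperPolar I (lowerPolar R {m})) = lowerPolar R {m})
    (c : Concept G M I) : Concept G M I where
  extent := lowerPolar R c.intent
  intent := upperPolar I (lowerPolar R c.intent)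
  upperPolar_extent := rfl
  lowerPolar_intent := stable_extentClosure_box I R h c.intent

/-- The diamond operation `⟨R_◇⟩c = ((R_◇^{(0)}[⟦c⟧])^↓, R_◇^{(0)}[⟦c⟧])` on the concept
lattice of an enriched formal context. -/
def diaConcept (I : G → M → Prop) (R : M → G → Prop)
    (h : ∀ g : G,
      upperPolar I (lowerPolar I (lowerPolar R {g})) = lowerPolar R {g})
    (c : Concept G M I) : Concept G M I where
  extent := lowerPolar I (lowerPolar R c.extent)
  intent := lowerPolar R c.extent
  upperPolar_extent := stable_extentClosure_dia I R h c.extent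
  lowerPolar_intent := rfl

/-- The interpretation of a μ-calculus formula as a formal concept, given a valuation `V`
of the atoms and an assignment `A` of the variables. Fixed points are given by their
Knaster–Tarski descriptions `μz.φ = ⋀{c : ⟦φ⟧_{A[z↦c]} ≤ c}` and
`νz.φ = ⋁{c : c ≤ ⟦φ⟧_{A[z↦c]}}`. -/
def MuForm.sem [DecidableEq Var] (I : G → M → Prop) (Rbox : G → M → Prop)
    (Rdia : M → G → Prop)
    (hbox : ∀ m : M,
      lowerPolar I (upperPolar I (lowerPolar Rbox {m})) = lowerPolar Rbox {m})
    (hdia : ∀ g : G,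
      upperPolar I (lowerPolar I (lowerPolar Rdia {g})) = lowerPolar Rdia {g})
    (V : P → Concept G M I) :
    MuForm P Var → (Var → Concept G M I) → Concept G M I
  | atom p, _ => V p
  | var v, A => A v
  | bot, _ => ⊥
  | top, _ => ⊤
  | MuForm.or φ ψ, A => sem I Rbox Rdia hbox hdia V φ A ⊔ sem I Rbox Rdia hbox hdia V ψ A
  | MuForm.and φ ψ, A => sem I Rbox Rdia hbox hdia V φ A ⊓ sem I Rbox Rdia hbox hdia V ψ A
  | box φ, A => boxConcept I Rbox hbox (sem I Rbox Rdia hbox hdia V φ A)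
  | dia φ, A => diaConcept I Rdia hdia (sem I Rbox Rdia hbox hdia V φ A)
  | mu v φ, A =>
      sInf {c | sem I Rbox Rdia hbox hdia V φ (Function.update A v c) ≤ c}
  | nu v φ, A =>
      sSup {c | c ≤ sem I Rbox Rdia hbox hdia V φ (Function.update A v c)}

/-- The set of free variables of a μ-calculus formula. -/
def MuForm.freeVars : MuForm P Var → Set Var
  | atom _ => ∅
  | var v => {v}
  | bot => ∅
  | top => ∅
  | MuForm.or φ ψ => freeVars φ ∪ freeVars ψ
  | MuForm.and φ ψ => freeVars φ ∪ freeVars ψ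
  | box φ => freeVars φ
  | dia φ => freeVars φ
  | mu v φ => freeVars φ \ {v}
  | nu v φ => freeVars φ \ {v}

/-- A simulation from the polarity-based model `((G₁,M₁,I₁,Rb₁,Rd₁),V₁)` to the
polarity-based model `((G₂,M₂,I₂,Rb₂,Rd₂),V₂)`: a pair of relations `(S, T)` satisfying
conditions (1)–(6) of Definition 5.1. -/
def IsSimulation {P G₁ M₁ G₂ M₂ : Type*}
    (I₁ : G₁ → M₁ → Prop) (Rb₁ : G₁ → M₁ → Prop) (Rd₁ : M₁ → G₁ → Prop)
    (V₁ : P → Concept G₁ M₁ I₁)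
    (I₂ : G₂ → M₂ → Prop) (Rb₂ : G₂ → M₂ → Prop) (Rd₂ : M₂ → G₂ → Prop)
    (V₂ : P → Concept G₂ M₂ I₂)
    (S : G₁ → G₂ → Prop) (T : M₁ → M₂ → Prop) : Prop :=
  (∀ p : P, ∀ g₁ g₂, S g₁ g₂ → g₁ ∈ (V₁ p).extent → g₂ ∈ (V₂ p).extent) ∧
  (∀ p : P, ∀ m₁ m₂, T m₁ m₂ → m₂ ∈ (V₂ p).intent → m₁ ∈ (V₁ p).intent) ∧
  (∀ g₁ g₂ m₂, S g₁ g₂ → ¬ I₂ g₂ m₂ → ∃ m₁, ¬ I₁ g₁ m₁ ∧ T m₁ m₂) ∧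
  (∀ m₁ m₂ g₁, T m₁ m₂ → ¬ I₁ g₁ m₁ → ∃ g₂, ¬ I₂ g₂ m₂ ∧ S g₁ g₂) ∧
  (∀ g₁ g₂ m₂, S g₁ g₂ → ¬ Rb₂ g₂ m₂ → ∃ m₁, ¬ Rb₁ g₁ m₁ ∧ T m₁ m₂) ∧
  (∀ m₁ m₂ g₁, T m₁ m₂ → ¬ Rd₁ m₁ g₁ → ∃ g₂, ¬ Rd₂ m₂ g₂ ∧ S g₁ g₂)


/-- Auxiliary: if `c ≤ d` pointwise, updates compare pointwise. -/
theorem update_le_update {Var : Type*} [DecidableEq Var] {L : Type*} [Preorder L]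
    {A A' : Var → L} (h : ∀ w, A w ≤ A' w) (v : Var) {c d : L} (hcd : c ≤ d) :
    ∀ w, Function.update A v c w ≤ Function.update A' v d w := by
  intro w
  rcases eq_or_ne w v with rfl | hw
  · simpa using hcd
  · simpa [Function.update_of_ne hw] using h w

/-- Membership in extension and intension gives the incidence relation. -/
theorem Concept.rel_of_mem {G M : Type*} {I : G → M → Prop} {c : Concept G M I}
    {g : G} {m : M} (hg : g ∈ c.extent) (hm : m ∈ c.intent) : I g m := by
  rw [← c.upperPolar_extent] at hm
  exact hm hg

/-- `sem` is monotone in the variable assignment. -/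
theorem MuForm.sem_mono {P Var G M : Type*} [DecidableEq Var]
    (I : G → M → Prop) (Rbox : G → M → Prop) (Rdia : M → G → Prop)
    (hbox : ∀ m : M,
      lowerPolar I (upperPolar I (lowerPolar Rbox {m})) = lowerPolar Rbox {m})
    (hdia : ∀ g : G,
      upperPolar I (lowerPolar I (lowerPolar Rdia {g})) = lowerPolar Rdia {g})
    (V : P → Concept G M I) (φ : MuForm P Var) :
    ∀ (A A' : Var → Concept G M I), (∀ v, A v ≤ A' v) →
      MuForm.sem I Rbox Rdia hbox hdia V φ A ≤ MuForm.sem I Rbox Rdia hbox hdia V φ A' := by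
  induction φ with
  | atom p => intro A A' h; exact le_rfl
  | var v => intro A A' h; exact h v
  | bot => intro A A' h; exact le_rfl
  | top => intro A A' h; exact le_rfl
  | or φ ψ ihφ ihψ =>
    intro A A' h
    exact sup_le_sup (ihφ A A' h) (ihψ A A' h)
  | and φ ψ ihφ ihψ =>
    intro A A' h
    exact inf_le_inf (ihφ A A' h) (ihψ A A' h)
  | box φ ih =>
    intro A A' h
    intro g hg m hm
    exact hg (Concept.intent_subset_intent_iff.2 (ih A A' h) hm)
  | dia φ ih =>
    intro A A' h
    exact Concept.intent_subset_intent_iff.1 (fun m hm g hg => hm ((ih A A' h) hg))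
  | mu v φ ih =>
    intro A A' h
    refine le_sInf fun c hc => sInf_le ?_
    exact le_trans (ih _ _ (update_le_update h v le_rfl)) hc
  | nu v φ ih =>
    intro A A' h
    refine sSup_le fun c hc => le_sSup ?_
    exact le_trans hc (ih _ _ (update_le_update h v le_rfl))

/-- Condition (2')⇒(1'): the intension half of simulation invariance implies the
extension half, for any pair of concepts, using condition (3). -/
theorem half1_of_half2 {G₁ M₁ G₂ M₂ : Type*} {I₁ : G₁ → M₁ → Prop} {I₂ : G₂ → M₂ → Prop}
    {S : G₁ → G₂ → Prop} {T : M₁ → M₂ → Prop}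
    (sim3 : ∀ g₁ g₂ m₂, S g₁ g₂ → ¬ I₂ g₂ m₂ → ∃ m₁, ¬ I₁ g₁ m₁ ∧ T m₁ m₂)
    {c₁ : Concept G₁ M₁ I₁} {c₂ : Concept G₂ M₂ I₂}
    (h2 : ∀ m₁ m₂, T m₁ m₂ → m₂ ∈ c₂.intent → m₁ ∈ c₁.intent) :
    ∀ g₁ g₂, S g₁ g₂ → g₁ ∈ c₁.extent → g₂ ∈ c₂.extent := by
  intro g₁ g₂ hS hg₁
  rw [← c₂.lowerPolar_intent]
  intro m₂ hm₂
  by_contra hI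
  obtain ⟨m₁, hI₁, hT⟩ := sim3 g₁ g₂ m₂ hS hI
  exact hI₁ (Concept.rel_of_mem hg₁ (h2 m₁ m₂ hT hm₂))

/-- Condition (1')⇒(2'): the extension half of simulation invariance implies the
intension half, for any pair of concepts, using condition (4). -/
theorem half2_of_half1 {G₁ M₁ G₂ M₂ : Type*} {I₁ : G₁ → M₁ → Prop} {I₂ : G₂ → M₂ → Prop}
    {S : G₁ → G₂ → Prop} {T : M₁ → M₂ → Prop}
    (sim4 : ∀ m₁ m₂ g₁, T m₁ m₂ → ¬ I₁ g₁ m₁ → ∃ g₂, ¬ I₂ g₂ m₂ ∧ S g₁ g₂)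
    {c₁ : Concept G₁ M₁ I₁} {c₂ : Concept G₂ M₂ I₂}
    (h1 : ∀ g₁ g₂, S g₁ g₂ → g₁ ∈ c₁.extent → g₂ ∈ c₂.extent) :
    ∀ m₁ m₂, T m₁ m₂ → m₂ ∈ c₂.intent → m₁ ∈ c₁.intent := by
  intro m₁ m₂ hT hm₂
  rw [← c₁.upperPolar_extent]
  intro g₁ hg₁
  by_contra hI
  obtain ⟨g₂, hI₂, hS⟩ := sim4 m₁ m₂ g₁ hT hI
  exact hI₂ (Concept.rel_of_mem (h1 g₁ g₂ hS hg₁) hm₂)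

/-- The main induction: simulation invariance for formulas possibly with free variables,
provided the assignments are related at every free variable. -/
theorem simulation_invariance_aux {P Var : Type*} [DecidableEq Var] {G₁ M₁ G₂ M₂ : Type*}
    (I₁ : G₁ → M₁ → Prop) (Rb₁ : G₁ → M₁ → Prop) (Rd₁ : M₁ → G₁ → Prop)
    (hb₁0 : ∀ m : M₁,
      lowerPolar I₁ (upperPolar I₁ (lowerPolar Rb₁ {m})) = lowerPolar Rb₁ {m})
    (hd₁0 : ∀ g : G₁,
      upperPolar I₁ (lowerPolar I₁ (lowerPolar Rd₁ {g})) = lowerPolar Rd₁ {g})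
    (V₁ : P → Concept G₁ M₁ I₁)
    (I₂ : G₂ → M₂ → Prop) (Rb₂ : G₂ → M₂ → Prop) (Rd₂ : M₂ → G₂ → Prop)
    (hb₂0 : ∀ m : M₂,
      lowerPolar I₂ (upperPolar I₂ (lowerPolar Rb₂ {m})) = lowerPolar Rb₂ {m})
    (hd₂0 : ∀ g : G₂,
      upperPolar I₂ (lowerPolar I₂ (lowerPolar Rd₂ {g})) = lowerPolar Rd₂ {g})
    (V₂ : P → Concept G₂ M₂ I₂)
    (S : G₁ → G₂ → Prop) (T : M₁ → M₂ → Prop)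
    (hsim : IsSimulation I₁ Rb₁ Rd₁ V₁ I₂ Rb₂ Rd₂ V₂ S T)
    (φ : MuForm P Var) :
    ∀ (A₁ : Var → Concept G₁ M₁ I₁) (A₂ : Var → Concept G₂ M₂ I₂),
    (∀ v ∈ φ.freeVars,
        (∀ g₁ g₂, S g₁ g₂ → g₁ ∈ (A₁ v).extent → g₂ ∈ (A₂ v).extent) ∧
        (∀ m₁ m₂, T m₁ m₂ → m₂ ∈ (A₂ v).intent → m₁ ∈ (A₁ v).intent)) →
    (∀ g₁ g₂, S g₁ g₂ →
        g₁ ∈ (MuForm.sem I₁ Rb₁ Rd₁ hb₁0 hd₁0 V₁ φ A₁).extent →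
        g₂ ∈ (MuForm.sem I₂ Rb₂ Rd₂ hb₂0 hd₂0 V₂ φ A₂).extent) ∧
    (∀ m₁ m₂, T m₁ m₂ →
        m₂ ∈ (MuForm.sem I₂ Rb₂ Rd₂ hb₂0 hd₂0 V₂ φ A₂).intent →
        m₁ ∈ (MuForm.sem I₁ Rb₁ Rd₁ hb₁0 hd₁0 V₁ φ A₁).intent) := by
  obtain ⟨s1, s2, s3, s4, s5, s6⟩ := hsim
  induction φ with
  | atom p =>
    intro A₁ A₂ _
    exact ⟨s1 p, s2 p⟩
  | var v =>
    intro A₁ A₂ hA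
    exact hA v rfl
  | bot =>
    intro A₁ A₂ _
    have h2 : ∀ m₁ m₂, T m₁ m₂ → m₂ ∈ (⊥ : Concept G₂ M₂ I₂).intent →
        m₁ ∈ (⊥ : Concept G₁ M₁ I₁).intent := fun _ _ _ _ => trivial
    exact ⟨half1_of_half2 s3 h2, h2⟩
  | top =>
    intro A₁ A₂ _
    have h1 : ∀ g₁ g₂, S g₁ g₂ → g₁ ∈ (⊤ : Concept G₁ M₁ I₁).extent →
        g₂ ∈ (⊤ : Concept G₂ M₂ I₂).extent := fun _ _ _ _ => trivial
    exact ⟨h1, half2_of_half1 s4 h1⟩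
  | or φ ψ ihφ ihψ =>
    intro A₁ A₂ hA
    have hφ := ihφ A₁ A₂ (fun v hv => hA v (Or.inl hv))
    have hψ := ihψ A₁ A₂ (fun v hv => hA v (Or.inr hv))
    have h2 : ∀ m₁ m₂, T m₁ m₂ →
        m₂ ∈ (MuForm.sem I₂ Rb₂ Rd₂ hb₂0 hd₂0 V₂ (φ.or ψ) A₂).intent →
        m₁ ∈ (MuForm.sem I₁ Rb₁ Rd₁ hb₁0 hd₁0 V₁ (φ.or ψ) A₁).intent := by
      intro m₁ m₂ hT hm₂
      exact ⟨hφ.2 m₁ m₂ hT hm₂.1, hψ.2 m₁ m₂ hT hm₂.2⟩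
    exact ⟨half1_of_half2 s3 h2, h2⟩
  | and φ ψ ihφ ihψ =>
    intro A₁ A₂ hA
    have hφ := ihφ A₁ A₂ (fun v hv => hA v (Or.inl hv))
    have hψ := ihψ A₁ A₂ (fun v hv => hA v (Or.inr hv))
    have h1 : ∀ g₁ g₂, S g₁ g₂ →
        g₁ ∈ (MuForm.sem I₁ Rb₁ Rd₁ hb₁0 hd₁0 V₁ (φ.and ψ) A₁).extent →
        g₂ ∈ (MuForm.sem I₂ Rb₂ Rd₂ hb₂0 hd₂0 V₂ (φ.and ψ) A₂).extent := by
      intro g₁ g₂ hS hg₁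
      exact ⟨hφ.1 g₁ g₂ hS hg₁.1, hψ.1 g₁ g₂ hS hg₁.2⟩
    exact ⟨h1, half2_of_half1 s4 h1⟩
  | box φ ih =>
    intro A₁ A₂ hA
    have hφ := ih A₁ A₂ hA
    have h1 : ∀ g₁ g₂, S g₁ g₂ →
        g₁ ∈ (MuForm.sem I₁ Rb₁ Rd₁ hb₁0 hd₁0 V₁ φ.box A₁).extent →
        g₂ ∈ (MuForm.sem I₂ Rb₂ Rd₂ hb₂0 hd₂0 V₂ φ.box A₂).extent := by
      intro g₁ g₂ hS hg₁
      intro m₂ hm₂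
      by_contra hR
      obtain ⟨m₁, hR₁, hT⟩ := s5 g₁ g₂ m₂ hS hR
      exact hR₁ (hg₁ (hφ.2 m₁ m₂ hT hm₂))
    exact ⟨h1, half2_of_half1 s4 h1⟩
  | dia φ ih =>
    intro A₁ A₂ hA
    have hφ := ih A₁ A₂ hA
    have h2 : ∀ m₁ m₂, T m₁ m₂ →
        m₂ ∈ (MuForm.sem I₂ Rb₂ Rd₂ hb₂0 hd₂0 V₂ φ.dia A₂).intent →
        m₁ ∈ (MuForm.sem I₁ Rb₁ Rd₁ hb₁0 hd₁0 V₁ φ.dia A₁).intent := by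
      intro m₁ m₂ hT hm₂
      intro g₁ hg₁
      by_contra hR
      obtain ⟨g₂, hR₂, hS⟩ := s6 m₁ m₂ g₁ hT hR
      exact hR₂ (hm₂ (hφ.1 g₁ g₂ hS hg₁))
    exact ⟨half1_of_half2 s3 h2, h2⟩
  | mu v φ ih =>
    intro A₁ A₂ hA
    set F₁ : Concept G₁ M₁ I₁ → Concept G₁ M₁ I₁ :=
      fun c => MuForm.sem I₁ Rb₁ Rd₁ hb₁0 hd₁0 V₁ φ (Function.update A₁ v c) with hF₁
    set F₂ : Concept G₂ M₂ I₂ → Concept G₂ M₂ I₂ :=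
      fun c => MuForm.sem I₂ Rb₂ Rd₂ hb₂0 hd₂0 V₂ φ (Function.update A₂ v c) with hF₂
    have hL₁ : MuForm.sem I₁ Rb₁ Rd₁ hb₁0 hd₁0 V₁ (MuForm.mu v φ) A₁
        = sInf {c | F₁ c ≤ c} := rfl
    have hL₂ : MuForm.sem I₂ Rb₂ Rd₂ hb₂0 hd₂0 V₂ (MuForm.mu v φ) A₂
        = sInf {c | F₂ c ≤ c} := rfl
    set L₂ : Concept G₂ M₂ I₂ := sInf {c | F₂ c ≤ c} with hL₂def
    -- L₂ is a prefixpoint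
    have hF₂mono : ∀ c d : Concept G₂ M₂ I₂, c ≤ d → F₂ c ≤ F₂ d := by
      intro c d hcd
      exact MuForm.sem_mono I₂ Rb₂ Rd₂ hb₂0 hd₂0 V₂ φ _ _
        (update_le_update (fun _ => le_rfl) v hcd)
    have hpre : F₂ L₂ ≤ L₂ :=
      le_sInf fun c hc => le_trans (hF₂mono _ _ (sInf_le hc)) hc
    -- the pulled-back concept on side 1
    set Y₀ : Set M₁ := {m₁ | ∃ m₂, T m₁ m₂ ∧ m₂ ∈ L₂.intent} with hY₀
    set c₁ : Concept G₁ M₁ I₁ :=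
      ⟨lowerPolar I₁ Y₀, upperPolar I₁ (lowerPolar I₁ Y₀), rfl,
        lowerPolar_upperPolar_lowerPolar I₁ Y₀⟩ with hc₁
    have hY₀sub : Y₀ ⊆ c₁.intent := subset_upperPolar_lowerPolar I₁ Y₀
    have h2c : ∀ m₁ m₂, T m₁ m₂ → m₂ ∈ L₂.intent → m₁ ∈ c₁.intent :=
      fun m₁ m₂ hT hm₂ => hY₀sub ⟨m₂, hT, hm₂⟩
    have h1c := half1_of_half2 s3 h2c
    -- relate updated assignments and apply the induction hypothesis
    have hrel := ih (Function.update A₁ v c₁) (Function.update A₂ v L₂) (by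
      intro w hw
      rcases eq_or_ne w v with rfl | hwv
      · simpa using ⟨h1c, h2c⟩
      · simp only [Function.update_of_ne hwv]
        exact hA w ⟨hw, hwv⟩)
    -- c₁ is a prefixpoint of F₁
    have hc₁pre : F₁ c₁ ≤ c₁ := by
      intro g₁ hg₁
      show g₁ ∈ lowerPolar I₁ Y₀
      rintro m₁ ⟨m₂, hT, hm₂⟩
      have hm₂' : m₂ ∈ (F₂ L₂).intent := Concept.intent_subset_intent_iff.2 hpre hm₂
      exact Concept.rel_of_mem hg₁ (hrel.2 m₁ m₂ hT hm₂')
    have hle : sInf {c | F₁ c ≤ c} ≤ c₁ := sInf_le hc₁pre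
    have h2 : ∀ m₁ m₂, T m₁ m₂ →
        m₂ ∈ (MuForm.sem I₂ Rb₂ Rd₂ hb₂0 hd₂0 V₂ (MuForm.mu v φ) A₂).intent →
        m₁ ∈ (MuForm.sem I₁ Rb₁ Rd₁ hb₁0 hd₁0 V₁ (MuForm.mu v φ) A₁).intent := by
      intro m₁ m₂ hT hm₂
      rw [hL₁]
      rw [hL₂] at hm₂
      exact Concept.intent_subset_intent_iff.2 hle (h2c m₁ m₂ hT hm₂)
    exact ⟨half1_of_half2 s3 h2, h2⟩
  | nu v φ ih =>
    intro A₁ A₂ hA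
    set F₁ : Concept G₁ M₁ I₁ → Concept G₁ M₁ I₁ :=
      fun c => MuForm.sem I₁ Rb₁ Rd₁ hb₁0 hd₁0 V₁ φ (Function.update A₁ v c) with hF₁
    set F₂ : Concept G₂ M₂ I₂ → Concept G₂ M₂ I₂ :=
      fun c => MuForm.sem I₂ Rb₂ Rd₂ hb₂0 hd₂0 V₂ φ (Function.update A₂ v c) with hF₂
    have hG₁eq : MuForm.sem I₁ Rb₁ Rd₁ hb₁0 hd₁0 V₁ (MuForm.nu v φ) A₁
        = sSup {c | c ≤ F₁ c} := rfl
    have hG₂eq : MuForm.sem I₂ Rb₂ Rd₂ hb₂0 hd₂0 V₂ (MuForm.nu v φ) A₂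
        = sSup {c | c ≤ F₂ c} := rfl
    set L₁ : Concept G₁ M₁ I₁ := sSup {c | c ≤ F₁ c} with hL₁def
    have hF₁mono : ∀ c d : Concept G₁ M₁ I₁, c ≤ d → F₁ c ≤ F₁ d := by
      intro c d hcd
      exact MuForm.sem_mono I₁ Rb₁ Rd₁ hb₁0 hd₁0 V₁ φ _ _
        (update_le_update (fun _ => le_rfl) v hcd)
    have hpost : L₁ ≤ F₁ L₁ :=
      sSup_le fun c hc => le_trans hc (hF₁mono _ _ (le_sSup hc))
    -- the pushed-forward concept on side 2
    set B₀ : Set G₂ := {g₂ | ∃ g₁, S g₁ g₂ ∧ g₁ ∈ L₁.extent} with hB₀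
    set c₂ : Concept G₂ M₂ I₂ :=
      ⟨lowerPolar I₂ (upperPolar I₂ B₀), upperPolar I₂ B₀,
        upperPolar_lowerPolar_upperPolar I₂ B₀, rfl⟩ with hc₂
    have hB₀sub : B₀ ⊆ c₂.extent := subset_lowerPolar_upperPolar I₂ B₀
    have h1c : ∀ g₁ g₂, S g₁ g₂ → g₁ ∈ L₁.extent → g₂ ∈ c₂.extent :=
      fun g₁ g₂ hS hg₁ => hB₀sub ⟨g₁, hS, hg₁⟩
    have h2c := half2_of_half1 s4 h1c
    have hrel := ih (Function.update A₁ v L₁) (Function.update A₂ v c₂) (by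
      intro w hw
      rcases eq_or_ne w v with rfl | hwv
      · simpa using ⟨h1c, h2c⟩
      · simp only [Function.update_of_ne hwv]
        exact hA w ⟨hw, hwv⟩)
    -- c₂ is a postfixpoint of F₂
    have hB₀F : B₀ ⊆ (F₂ c₂).extent := by
      rintro g₂ ⟨g₁, hS, hg₁⟩
      exact hrel.1 g₁ g₂ hS (hpost hg₁)
    have hc₂post : c₂ ≤ F₂ c₂ := by
      intro g₂ hg₂
      have hsub : (F₂ c₂).intent ⊆ upperPolar I₂ B₀ := by
        rw [← (F₂ c₂).upperPolar_extent]
        exact upperPolar_anti I₂ hB₀F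
      have : g₂ ∈ lowerPolar I₂ ((F₂ c₂).intent) :=
        fun m hm => hg₂ (hsub hm)
      rwa [(F₂ c₂).lowerPolar_intent] at this
    have hle : c₂ ≤ sSup {c | c ≤ F₂ c} := le_sSup hc₂post
    have h1 : ∀ g₁ g₂, S g₁ g₂ →
        g₁ ∈ (MuForm.sem I₁ Rb₁ Rd₁ hb₁0 hd₁0 V₁ (MuForm.nu v φ) A₁).extent →
        g₂ ∈ (MuForm.sem I₂ Rb₂ Rd₂ hb₂0 hd₂0 V₂ (MuForm.nu v φ) A₂).extent := by
      intro g₁ g₂ hS hg₁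
      rw [hG₂eq]
      rw [hG₁eq] at hg₁
      exact hle (h1c g₁ g₂ hS hg₁)
    exact ⟨h1, half2_of_half1 s4 h1⟩

/-- If `(S, T)` is a simulation from the polarity-based model `𝕄₁` to the
polarity-based model `𝕄₂`, then for every μ-calculus formula `φ` with no free variables:
(1) `g₁ S g₂` and `𝕄₁, g₁ ⊩ φ` imply `𝕄₂, g₂ ⊩ φ`; and
(2) `m₁ T m₂` and `𝕄₂, m₂ ≻ φ` imply `𝕄₁, m₁ ≻ φ`. -/
theorem simulation_invariance [DecidableEq Var] {G₁ M₁ G₂ M₂ : Type*}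
    (I₁ : G₁ → M₁ → Prop) (Rb₁ : G₁ → M₁ → Prop) (Rd₁ : M₁ → G₁ → Prop)
    (hb₁0 : ∀ m : M₁,
      lowerPolar I₁ (upperPolar I₁ (lowerPolar Rb₁ {m})) = lowerPolar Rb₁ {m})
    (hb₁1 : ∀ g : G₁,
      upperPolar I₁ (lowerPolar I₁ (upperPolar Rb₁ {g})) = upperPolar Rb₁ {g})
    (hd₁0 : ∀ g : G₁,
      upperPolar I₁ (lowerPolar I₁ (lowerPolar Rd₁ {g})) = lowerPolar Rd₁ {g})
    (hd₁1 : ∀ m : M₁,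
      lowerPolar I₁ (upperPolar I₁ (upperPolar Rd₁ {m})) = upperPolar Rd₁ {m})
    (V₁ : P → Concept G₁ M₁ I₁)
    (I₂ : G₂ → M₂ → Prop) (Rb₂ : G₂ → M₂ → Prop) (Rd₂ : M₂ → G₂ → Prop)
    (hb₂0 : ∀ m : M₂,
      lowerPolar I₂ (upperPolar I₂ (lowerPolar Rb₂ {m})) = lowerPolar Rb₂ {m})
    (hb₂1 : ∀ g : G₂,
      upperPolar I₂ (lowerPolar I₂ (upperPolar Rb₂ {g})) = upperPolar Rb₂ {g})
    (hd₂0 : ∀ g : G₂,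
      upperPolar I₂ (lowerPolar I₂ (lowerPolar Rd₂ {g})) = lowerPolar Rd₂ {g})
    (hd₂1 : ∀ m : M₂,
      lowerPolar I₂ (upperPolar I₂ (upperPolar Rd₂ {m})) = upperPolar Rd₂ {m})
    (V₂ : P → Concept G₂ M₂ I₂)
    (S : G₁ → G₂ → Prop) (T : M₁ → M₂ → Prop)
    (hsim : IsSimulation I₁ Rb₁ Rd₁ V₁ I₂ Rb₂ Rd₂ V₂ S T)
    (φ : MuForm P Var) (hφ : φ.freeVars = ∅)
    (A₁ : Var → Concept G₁ M₁ I₁) (A₂ : Var → Concept G₂ M₂ I₂) :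
    (∀ g₁ g₂, S g₁ g₂ →
        g₁ ∈ (MuForm.sem I₁ Rb₁ Rd₁ hb₁0 hd₁0 V₁ φ A₁).extent →
        g₂ ∈ (MuForm.sem I₂ Rb₂ Rd₂ hb₂0 hd₂0 V₂ φ A₂).extent) ∧
    (∀ m₁ m₂, T m₁ m₂ →
        m₂ ∈ (MuForm.sem I₂ Rb₂ Rd₂ hb₂0 hd₂0 V₂ φ A₂).intent →
        m₁ ∈ (MuForm.sem I₁ Rb₁ Rd₁ hb₁0 hd₁0 V₁ φ A₁).intent) := by
  refine simulation_invariance_aux I₁ Rb₁ Rd₁ hb₁0 hd₁0 V₁ I₂ Rb₂ Rd₂ hb₂0 hd₂0 V₂ S T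
    hsim φ A₁ A₂ ?_
  intro v hv
  rw [hφ] at hv
  exact absurd hv (Set.notMem_empty v)
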